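/- Let B be a box with side lengths x, y, z each at least l ≥ 1, and suppose every box in a family U has all side lengths at least l and total surface area at most s. Then the number of boxes of U whose closed boundary shares a 2-dimensional face region with a face of B is at most s/l², and the number of boxes of U adjacent to B only along an edge of B is at most 4(x+y+z)/l + 12; consequently B is adjacent to at most 3s/l² + 12 boxes of U. -/

import Mathlib

/-- An axis-aligned box in `ℤ³`, given by lower and upper corners. -/
structure IntBox where
  lo : Fin 3 → ℤ
  hi : Fin 3 → ℤ
  lo_lt_hi : ∀ i, lo i < hi i

/-- Side length of a box in dimension `i`. -/
def IntBox.side (b : IntBox) (i : Fin 3) : ℤ := b.hi i - b.lo i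

/-- Total surface area of a box. -/
def IntBox.surface (b : IntBox) : ℤ :=
  2 * b.side 0 * b.side 1 + 2 * b.side 1 * b.side 2 + 2 * b.side 0 * b.side 2

/-- Two boxes have disjoint interiors. -/
def IntBox.IntDisjoint (b b' : IntBox) : Prop :=
  ∃ i, b.hi i ≤ b'.lo i ∨ b'.hi i ≤ b.lo i

/-- Two boxes are adjacent: face-to-face contact with positive area. -/
def IntBox.Adj (b b' : IntBox) : Prop :=
  ∃ i, (b.hi i = b'.lo i ∨ b'.hi i = b.lo i) ∧
    ∀ j, j ≠ i → max (b.lo j) (b'.lo j) < min (b.hi j) (b'.hi j)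

/-- `b'` has a face totally adjacent to (contained in) a face of `b`. -/
def IntBox.FaceAdj (b b' : IntBox) : Prop :=
  ∃ i, (b.hi i = b'.lo i ∨ b'.hi i = b.lo i) ∧
    ∀ j, j ≠ i → b.lo j ≤ b'.lo j ∧ b'.hi j ≤ b.hi j

namespace NBAux

/-- `b` is "pinned" at the `ε`-side plane of `B` in coordinate `m`. -/
def Pinned (B b : IntBox) (m : Fin 3) (ε : Bool) : Prop :=
  if ε then b.lo m ≤ B.hi m ∧ B.hi m < b.hi m
  else b.lo m < B.lo m ∧ B.lo m ≤ b.hi m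

lemma pinned_not_sep {B b b' : IntBox} {m : Fin 3} {ε : Bool}
    (h : Pinned B b m ε) (h' : Pinned B b' m ε) :
    ¬ (b.hi m ≤ b'.lo m ∨ b'.hi m ≤ b.lo m) := by
  cases ε <;> simp only [Pinned, if_true, if_false, Bool.false_eq_true] at h h' <;> omega

def ContactAt (B b : IntBox) (i : Fin 3) (ε : Bool) : Prop :=
  if ε then B.hi i = b.lo i else b.hi i = B.lo i

lemma contactAt_pinned {B b : IntBox} {i : Fin 3} {ε : Bool} (h : ContactAt B b i ε) :
    Pinned B b i ε := by
  have := b.lo_lt_hi i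
  cases ε <;> simp only [ContactAt, Pinned, if_true, if_false, Bool.false_eq_true] at * <;> omega

def VertexProp (B b : IntBox) (v : Fin 3 → Bool) : Prop := ∀ m, Pinned B b m (v m)

def EdgeProp (B b : IntBox) (k : Fin 3) (v : Fin 3 → Bool) : Prop :=
  (∀ m, m ≠ k → Pinned B b m (v m)) ∧ B.lo k ≤ b.lo k ∧ b.hi k ≤ B.hi k

def FaceProp (B b : IntBox) (i : Fin 3) (ε : Bool) : Prop :=
  ContactAt B b i ε ∧ ∀ m, m ≠ i → B.lo m ≤ b.lo m ∧ b.hi m ≤ B.hi m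

lemma vertex_not_disjoint {B b b' : IntBox} {v : Fin 3 → Bool}
    (h : VertexProp B b v) (h' : VertexProp B b' v) : ¬ b.IntDisjoint b' := by
  rintro ⟨m, hm⟩; exact pinned_not_sep (h m) (h' m) hm

lemma edge_sep {B b b' : IntBox} {k : Fin 3} {v : Fin 3 → Bool}
    (h : EdgeProp B b k v) (h' : EdgeProp B b' k v) (hd : b.IntDisjoint b') :
    b.hi k ≤ b'.lo k ∨ b'.hi k ≤ b.lo k := by
  obtain ⟨m, hm⟩ := hd
  by_cases hmk : m = k
  · exact hmk ▸ hm
  · exact absurd hm (pinned_not_sep (h.1 m hmk) (h'.1 m hmk))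

lemma face_sep {B b b' : IntBox} {i : Fin 3} {ε : Bool}
    (h : FaceProp B b i ε) (h' : FaceProp B b' i ε) (hd : b.IntDisjoint b') :
    ∃ m, m ≠ i ∧ (b.hi m ≤ b'.lo m ∨ b'.hi m ≤ b.lo m) := by
  obtain ⟨m, hm⟩ := hd
  by_cases hmi : m = i
  · exact absurd hm (hmi ▸ pinned_not_sep (contactAt_pinned h.1) (contactAt_pinned h'.1))
  · exact ⟨m, hmi, hm⟩

lemma third (i j : Fin 3) (h : i ≠ j) :
    ∃ k, k ≠ i ∧ k ≠ j ∧ ∀ m : Fin 3, m = i ∨ m = j ∨ m = k := by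
  revert h; revert i j; decide

/-- classification of faces -/
lemma classifyFace {B b : IntBox} (h : B.FaceAdj b) :
    ∃ p : Fin 3 × Bool, FaceProp B b p.1 p.2 := by
  obtain ⟨i, hc, hcont⟩ := h
  rcases hc with hc | hc
  · exact ⟨(i, true), by simpa [FaceProp, ContactAt] using ⟨hc, hcont⟩⟩
  · exact ⟨(i, false), by simpa [FaceProp, ContactAt] using ⟨hc, hcont⟩⟩

/-- classification of non-face neighbours: vertex or edge type. -/
lemma classifyEdge {B b : IntBox} (hA : B.Adj b) (hF : ¬ B.FaceAdj b) :
    (∃ v, VertexProp B b v) ∨ (∃ q : Fin 3 × (Fin 3 → Bool), q.2 q.1 = false ∧ EdgeProp B b q.1 q.2) := by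
  obtain ⟨i, hc, hov⟩ := hA
  -- contact side
  have hε : ∃ ε, ContactAt B b i ε := by
    rcases hc with hc | hc
    exacts [⟨true, by simpa [ContactAt] using hc⟩, ⟨false, by simpa [ContactAt] using hc⟩]
  obtain ⟨ε, hcon⟩ := hε
  -- a violated coordinate j
  have hviol : ∃ j, j ≠ i ∧ ¬ (B.lo j ≤ b.lo j ∧ b.hi j ≤ B.hi j) := by
    by_contra hcontra
    push_neg at hcontra
    exact hF ⟨i, hc, fun j hj => hcontra j hj⟩
  obtain ⟨j, hji, hj⟩ := hviol
  have hovj := hov j hji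
  -- straddle at j
  have hδ : ∃ δ, Pinned B b j δ ∧ (B.lo j ≤ b.lo j → δ = true) := by
    by_cases h1 : b.lo j < B.lo j
    · exact ⟨false, by simp only [Pinned, Bool.false_eq_true, if_false]; omega, by omega⟩
    · refine ⟨true, by simp only [Pinned, if_true]; omega, fun _ => rfl⟩
  obtain ⟨δ, hpj, _⟩ := hδ
  obtain ⟨k, hki, hkj, hcover⟩ := third i j (Ne.symm hji)
  have hovk := hov k hki
  have hpi : Pinned B b i ε := contactAt_pinned hcon
  by_cases hk1 : b.lo k < B.lo k
  · -- vertex, straddling k at lo side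
    refine Or.inl ⟨fun m => if m = i then ε else if m = j then δ else false, fun m => ?_⟩
    rcases hcover m with rfl | rfl | rfl
    · simpa using hpi
    · simp only [hji, if_false, if_pos rfl]; exact hpj
    · simp only [hki, hkj, if_false]
      simp only [Pinned, Bool.false_eq_true, if_false]; omega
  · by_cases hk2 : B.hi k < b.hi k
    · -- vertex, straddling k at hi side
      refine Or.inl ⟨fun m => if m = i then ε else if m = j then δ else true, fun m => ?_⟩
      rcases hcover m with rfl | rfl | rfl
      · simpa using hpi
      · simp only [hji, if_false, if_pos rfl]; exact hpj
      · simp only [hki, hkj, if_false]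
        simp only [Pinned, if_true]; omega
    · -- edge type along k
      refine Or.inr ⟨(k, fun m => if m = i then ε else if m = j then δ else false),
        by simp [hki, hkj], ?_⟩
      dsimp only
      refine ⟨fun m hm => ?_, by omega, by omega⟩
      rcases hcover m with rfl | rfl | rfl
      · simpa using hpi
      · simp only [hji, if_false, if_pos rfl]; exact hpj
      · exact absurd rfl hm

/-- generic packing bound -/
lemma card_mul_le {α : Type*} [DecidableEq α] (s : Finset IntBox) (t : IntBox → Finset α)
    (T : Finset α) (n : ℕ) (hsub : ∀ b ∈ s, t b ⊆ T) (hn : ∀ b ∈ s, n ≤ (t b).card)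
    (hd : ∀ b ∈ s, ∀ b' ∈ s, b ≠ b' → Disjoint (t b) (t b')) :
    s.card * n ≤ T.card := by
  calc s.card * n = ∑ _b ∈ s, n := by rw [Finset.sum_const, smul_eq_mul, mul_comm]
    _ ≤ ∑ b ∈ s, (t b).card := Finset.sum_le_sum hn
    _ = (s.biUnion t).card := (Finset.card_biUnion hd).symm
    _ ≤ T.card := Finset.card_le_card (Finset.biUnion_subset.mpr hsub)

def oth1 : Fin 3 → Fin 3 := ![1, 0, 0]
def oth2 : Fin 3 → Fin 3 := ![2, 2, 1]

lemma oth_spec : ∀ i : Fin 3, oth1 i ≠ i ∧ oth2 i ≠ i ∧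
    (∀ m : Fin 3, m = i ∨ m = oth1 i ∨ m = oth2 i) := by decide

lemma side_nonneg (B : IntBox) (m : Fin 3) : 0 ≤ B.side m := by
  have := B.lo_lt_hi m; unfold IntBox.side; omega

lemma face_count (l : ℤ) (hl : 1 ≤ l) (B : IntBox) (F : Finset IntBox)
    (hdisj : ∀ b ∈ F, ∀ b' ∈ F, b ≠ b' → b.IntDisjoint b')
    (hFl : ∀ b ∈ F, ∀ i, l ≤ b.side i)
    (hF : ∀ b ∈ F, B.FaceAdj b) :
    (F.card : ℤ) * (l * l) ≤ B.surface := by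
  classical
  have hl0 : (0 : ℤ) ≤ l := by omega
  set ff : IntBox → Fin 3 × Bool := fun b =>
    if h : ∃ p : Fin 3 × Bool, FaceProp B b p.1 p.2 then h.choose else (0, true) with hffdef
  have hff : ∀ b ∈ F, FaceProp B b (ff b).1 (ff b).2 := by
    intro b hb
    have h : ∃ p : Fin 3 × Bool, FaceProp B b p.1 p.2 := classifyFace (hF b hb)
    simp only [hffdef, dif_pos h]
    exact h.choose_spec
  have hcard : F.card = ∑ p : Fin 3 × Bool, (F.filter (fun b => ff b = p)).card :=
    Finset.card_eq_sum_card_fiberwise (fun b _ => Finset.mem_univ _)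
  have key : ∀ p : Fin 3 × Bool,
      ((F.filter (fun b => ff b = p)).card : ℤ) * (l * l)
        ≤ B.side (oth1 p.1) * B.side (oth2 p.1) := by
    rintro ⟨i, ε⟩
    obtain ⟨h1i, h2i, hcover⟩ := oth_spec i
    set G := F.filter (fun b => ff b = (i, ε)) with hG
    have hGmem : ∀ b ∈ G, FaceProp B b i ε := by
      intro b hb
      rw [hG, Finset.mem_filter] at hb
      have := hff b hb.1
      rw [hb.2] at this
      exact this
    have hGF : ∀ b ∈ G, b ∈ F := fun b hb => (Finset.mem_filter.mp hb).1
    have natineq : G.card * (l.toNat * l.toNat)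
        ≤ ((B.side (oth1 i)).toNat * (B.side (oth2 i)).toNat) := by
      have := card_mul_le G
        (fun b => Finset.Ico (b.lo (oth1 i)) (b.hi (oth1 i)) ×ˢ
                  Finset.Ico (b.lo (oth2 i)) (b.hi (oth2 i)))
        (Finset.Ico (B.lo (oth1 i)) (B.hi (oth1 i)) ×ˢ
         Finset.Ico (B.lo (oth2 i)) (B.hi (oth2 i)))
        (l.toNat * l.toNat)
        (by
          intro b hb
          have h1 := (hGmem b hb).2
          exact Finset.product_subset_product
            (Finset.Ico_subset_Ico (h1 _ h1i).1 (h1 _ h1i).2)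
            (Finset.Ico_subset_Ico (h1 _ h2i).1 (h1 _ h2i).2))
        (by
          intro b hb
          rw [Finset.card_product, Int.card_Ico, Int.card_Ico]
          exact Nat.mul_le_mul (Int.toNat_le_toNat (hFl b (hGF b hb) (oth1 i)))
            (Int.toNat_le_toNat (hFl b (hGF b hb) (oth2 i))))
        (by
          intro b hb b' hb' hne
          have hd := hdisj b (hGF b hb) b' (hGF b' hb') hne
          obtain ⟨m, hmi, hsep⟩ := face_sep (hGmem b hb) (hGmem b' hb') hd
          rw [Finset.disjoint_left]
          rintro ⟨a1, a2⟩ hmem hmem'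
          simp only [Finset.mem_product, Finset.mem_Ico] at hmem hmem'
          rcases hcover m with rfl | rfl | rfl
          · exact hmi rfl
          · omega
          · omega)
      rwa [Finset.card_product, Int.card_Ico, Int.card_Ico] at this
    have hs1 := side_nonneg B (oth1 i)
    have hs2 := side_nonneg B (oth2 i)
    calc (G.card : ℤ) * (l * l)
        = ((G.card * (l.toNat * l.toNat) : ℕ) : ℤ) := by
          push_cast [Int.toNat_of_nonneg hl0]; ring
      _ ≤ (((B.side (oth1 i)).toNat * (B.side (oth2 i)).toNat : ℕ) : ℤ) :=
          Nat.cast_le.mpr natineq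
      _ = B.side (oth1 i) * B.side (oth2 i) := by
          push_cast [Int.toNat_of_nonneg hs1, Int.toNat_of_nonneg hs2]; ring
  calc (F.card : ℤ) * (l * l)
      = ∑ p : Fin 3 × Bool, ((F.filter (fun b => ff b = p)).card : ℤ) * (l * l) := by
        rw [hcard]; push_cast; rw [Finset.sum_mul]
    _ ≤ ∑ p : Fin 3 × Bool, B.side (oth1 p.1) * B.side (oth2 p.1) :=
        Finset.sum_le_sum (fun p _ => key p)
    _ = B.surface := by
        rw [Fintype.sum_prod_type]
        simp only [Fintype.sum_bool, Fin.sum_univ_three]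
        show B.side (oth1 0) * B.side (oth2 0) + B.side (oth1 0) * B.side (oth2 0) +
          (B.side (oth1 1) * B.side (oth2 1) + B.side (oth1 1) * B.side (oth2 1)) +
          (B.side (oth1 2) * B.side (oth2 2) + B.side (oth1 2) * B.side (oth2 2)) = B.surface
        simp only [oth1, oth2]
        norm_num [IntBox.surface]
        rw [show (![1, 0, 0] : Fin 3 → Fin 3) 2 = 0 from rfl, show (![2, 2, 1] : Fin 3 → Fin 3) 2 = 1 from rfl]
        ring

lemma edge_count (l : ℤ) (hl : 1 ≤ l) (B : IntBox) (E : Finset IntBox)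
    (hdisj : ∀ b ∈ E, ∀ b' ∈ E, b ≠ b' → b.IntDisjoint b')
    (hEl : ∀ b ∈ E, ∀ i, l ≤ b.side i)
    (hE : ∀ b ∈ E, B.Adj b ∧ ¬ B.FaceAdj b) :
    (E.card : ℤ) * l ≤ 4 * (B.side 0 + B.side 1 + B.side 2) + 8 * l := by
  classical
  have hl0 : (0 : ℤ) ≤ l := by omega
  set EV := E.filter (fun b => ∃ v, VertexProp B b v) with hEV
  set EE := E.filter (fun b => ¬ ∃ v, VertexProp B b v) with hEE
  have hsplit : EV.card + EE.card = E.card := Finset.card_filter_add_card_filter_not _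
  -- vertex part
  have hVcard : EV.card ≤ 8 := by
    set gv : IntBox → (Fin 3 → Bool) := fun b =>
      if h : ∃ v, VertexProp B b v then h.choose else (fun _ => false) with hgv
    have hgvs : ∀ b ∈ EV, VertexProp B b (gv b) := by
      intro b hb
      have h : ∃ v, VertexProp B b v := (Finset.mem_filter.mp hb).2
      simp only [hgv, dif_pos h]
      exact h.choose_spec
    have hc : EV.card = ∑ v : Fin 3 → Bool, (EV.filter (fun b => gv b = v)).card :=
      Finset.card_eq_sum_card_fiberwise (fun b _ => Finset.mem_univ _)
    have hone : ∀ v : Fin 3 → Bool, (EV.filter (fun b => gv b = v)).card ≤ 1 := by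
      intro v
      rw [Finset.card_le_one]
      intro b hb b' hb'
      rw [Finset.mem_filter] at hb hb'
      by_contra hne
      have hd := hdisj b (Finset.mem_of_mem_filter _ hb.1) b' (Finset.mem_of_mem_filter _ hb'.1) hne
      have h1 := hgvs b hb.1; rw [hb.2] at h1
      have h2 := hgvs b' hb'.1; rw [hb'.2] at h2
      exact vertex_not_disjoint h1 h2 hd
    calc EV.card = ∑ v : Fin 3 → Bool, (EV.filter (fun b => gv b = v)).card := hc
      _ ≤ ∑ _v : Fin 3 → Bool, 1 := Finset.sum_le_sum (fun v _ => hone v)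
      _ = 8 := by simp
  -- edge part
  have hEEbound : (EE.card : ℤ) * l ≤ 4 * (B.side 0 + B.side 1 + B.side 2) := by
    set ge : IntBox → Fin 3 × (Fin 3 → Bool) := fun b =>
      if h : ∃ q : Fin 3 × (Fin 3 → Bool), q.2 q.1 = false ∧ EdgeProp B b q.1 q.2
      then h.choose else (0, fun _ => false) with hge
    have hges : ∀ b ∈ EE, (ge b).2 (ge b).1 = false ∧ EdgeProp B b (ge b).1 (ge b).2 := by
      intro b hb
      rw [hEE, Finset.mem_filter] at hb
      have h : ∃ q : Fin 3 × (Fin 3 → Bool), q.2 q.1 = false ∧ EdgeProp B b q.1 q.2 := by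
        rcases classifyEdge (hE b hb.1).1 (hE b hb.1).2 with hv | he
        · exact absurd hv hb.2
        · exact he
      simp only [hge, dif_pos h]
      exact h.choose_spec
    set L : Finset (Fin 3 × (Fin 3 → Bool)) :=
      Finset.univ.filter (fun q => q.2 q.1 = false) with hL
    have hc : EE.card = ∑ q ∈ L, (EE.filter (fun b => ge b = q)).card :=
      Finset.card_eq_sum_card_fiberwise (fun b hb => by
        rw [hL, Finset.mem_coe, Finset.mem_filter]
        exact ⟨Finset.mem_univ _, (hges b hb).1⟩)
    have key : ∀ q : Fin 3 × (Fin 3 → Bool),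
        ((EE.filter (fun b => ge b = q)).card : ℤ) * l ≤ B.side q.1 := by
      rintro ⟨k, v⟩
      set G := EE.filter (fun b => ge b = (k, v)) with hG
      have hGmem : ∀ b ∈ G, EdgeProp B b k v := by
        intro b hb
        rw [hG, Finset.mem_filter] at hb
        have := (hges b hb.1).2
        rw [hb.2] at this
        exact this
      have hGE : ∀ b ∈ G, b ∈ E := fun b hb =>
        Finset.mem_of_mem_filter _ ((Finset.mem_filter.mp hb).1)
      have natineq : G.card * l.toNat ≤ (B.side k).toNat := by
        have := card_mul_le G (fun b => Finset.Ico (b.lo k) (b.hi k))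
          (Finset.Ico (B.lo k) (B.hi k)) l.toNat
          (fun b hb => Finset.Ico_subset_Ico (hGmem b hb).2.1 (hGmem b hb).2.2)
          (by
            intro b hb
            rw [Int.card_Ico]
            exact Int.toNat_le_toNat (hEl b (hGE b hb) k))
          (by
            intro b hb b' hb' hne
            have hd := hdisj b (hGE b hb) b' (hGE b' hb') hne
            have hsep := edge_sep (hGmem b hb) (hGmem b' hb') hd
            rw [Finset.disjoint_left]
            intro a hmem hmem'
            simp only [Finset.mem_Ico] at hmem hmem'
            omega)
        rwa [Int.card_Ico] at this
      have hsk := side_nonneg B k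
      calc (G.card : ℤ) * l = ((G.card * l.toNat : ℕ) : ℤ) := by
            push_cast [Int.toNat_of_nonneg hl0]; ring
        _ ≤ (((B.side k).toNat : ℕ) : ℤ) := Nat.cast_le.mpr natineq
        _ = B.side k := Int.toNat_of_nonneg hsk
    have inner : ∀ k : Fin 3,
        (∑ v : Fin 3 → Bool, if v k = false then B.side k else 0) = 4 * B.side k := by
      intro k
      rw [← Finset.sum_filter, Finset.sum_const]
      have h4 : (Finset.univ.filter (fun v : Fin 3 → Bool => v k = false)).card = 4 := by
        revert k; decide
      rw [h4, nsmul_eq_mul]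
      norm_num
    have hsum : ∑ q ∈ L, B.side q.1 = 4 * (B.side 0 + B.side 1 + B.side 2) := by
      rw [hL, Finset.sum_filter, Fintype.sum_prod_type]
      simp only [inner]
      rw [Fin.sum_univ_three]
      ring
    calc (EE.card : ℤ) * l = ∑ q ∈ L, ((EE.filter (fun b => ge b = q)).card : ℤ) * l := by
          rw [hc]; push_cast; rw [Finset.sum_mul]
      _ ≤ ∑ q ∈ L, B.side q.1 := Finset.sum_le_sum (fun q _ => key q)
      _ = 4 * (B.side 0 + B.side 1 + B.side 2) := hsum
  have : (E.card : ℤ) * l = (EV.card : ℤ) * l + (EE.card : ℤ) * l := by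
    rw [← hsplit]; push_cast; ring
  rw [this]
  have hVl : (EV.card : ℤ) * l ≤ 8 * l := by
    have : (EV.card : ℤ) ≤ 8 := by exact_mod_cast hVcard
    nlinarith
  linarith

end NBAux

theorem neighbour_count_bound (l s : ℤ) (hl : 1 ≤ l) (hs : 0 < s)
    (U : Finset IntBox) (B : IntBox) (hBU : B ∉ U)
    (hdisj : ∀ b ∈ U, ∀ b' ∈ U, b ≠ b' → b.IntDisjoint b')
    (hdisjB : ∀ b ∈ U, B.IntDisjoint b)
    (hUl : ∀ b ∈ U, ∀ i, l ≤ b.side i)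
    (hUs : ∀ b ∈ U, b.surface ≤ s)
    (hBl : ∀ i, l ≤ B.side i)
    (hBs : B.surface ≤ s)
    (x y z : ℤ) (hx : x = B.side 0) (hy : y = B.side 1) (hz : z = B.side 2)
    [DecidablePred (B.FaceAdj ·)] [DecidablePred (B.Adj ·)] :
    ((U.filter (fun b => B.FaceAdj b)).card : ℝ) ≤ (s : ℝ) / (l : ℝ) ^ 2 ∧
    ((U.filter (fun b => B.Adj b ∧ ¬ B.FaceAdj b)).card : ℝ)
      ≤ 4 * ((x : ℝ) + y + z) / l + 12 ∧
    ((U.filter (fun b => B.Adj b)).card : ℝ) ≤ 3 * (s : ℝ) / (l : ℝ) ^ 2 + 12 := by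
  classical
  have hl0R : (0 : ℝ) < (l : ℝ) := by exact_mod_cast (by omega : (0:ℤ) < l)
  set F := U.filter (fun b => B.FaceAdj b) with hF
  set E := U.filter (fun b => B.Adj b ∧ ¬ B.FaceAdj b) with hE
  set A := U.filter (fun b => B.Adj b) with hA
  have hFsub : ∀ b ∈ F, b ∈ U := fun b hb => Finset.mem_of_mem_filter _ hb
  have hEsub : ∀ b ∈ E, b ∈ U := fun b hb => Finset.mem_of_mem_filter _ hb
  -- integer bound for face-adjacent boxes
  have c1 : (F.card : ℤ) * (l * l) ≤ s := by
    refine le_trans (NBAux.face_count l hl B F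
      (fun b hb b' hb' => hdisj b (hFsub b hb) b' (hFsub b' hb'))
      (fun b hb => hUl b (hFsub b hb))
      (fun b hb => (Finset.mem_filter.mp hb).2)) hBs
  -- integer bound for edge-adjacent boxes
  have c2 : (E.card : ℤ) * l ≤ 4 * (x + y + z) + 8 * l := by
    rw [hx, hy, hz]
    exact NBAux.edge_count l hl B E
      (fun b hb b' hb' => hdisj b (hEsub b hb) b' (hEsub b' hb'))
      (fun b hb => hUl b (hEsub b hb))
      (fun b hb => (Finset.mem_filter.mp hb).2)
  -- surface bound
  have hsurf : 2 * l * (x + y + z) ≤ s := by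
    rw [hx, hy, hz]
    have h1 : l * B.side 1 ≤ B.side 0 * B.side 1 :=
      mul_le_mul_of_nonneg_right (hBl 0) (NBAux.side_nonneg B 1)
    have h2 : l * B.side 2 ≤ B.side 1 * B.side 2 :=
      mul_le_mul_of_nonneg_right (hBl 1) (NBAux.side_nonneg B 2)
    have h3 : l * B.side 0 ≤ B.side 2 * B.side 0 :=
      mul_le_mul_of_nonneg_right (hBl 2) (NBAux.side_nonneg B 0)
    have hsB := hBs
    unfold IntBox.surface at hsB
    nlinarith [h1, h2, h3, hsB]
  -- union bound
  have c3n : A.card ≤ F.card + E.card := by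
    refine le_trans (Finset.card_le_card ?_) (Finset.card_union_le _ _)
    intro b hb
    rw [hA, Finset.mem_filter] at hb
    rw [Finset.mem_union, hF, hE, Finset.mem_filter, Finset.mem_filter]
    by_cases hfa : B.FaceAdj b
    · exact Or.inl ⟨hb.1, hfa⟩
    · exact Or.inr ⟨hb.1, hb.2, hfa⟩
  -- real bounds
  have hFR : (F.card : ℝ) ≤ (s : ℝ) / (l : ℝ) ^ 2 := by
    rw [le_div_iff₀ (by positivity)]
    rw [sq]
    exact_mod_cast c1
  have hER : (E.card : ℝ) ≤ 4 * ((x : ℝ) + y + z) / l + 12 := by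
    have hc2R : (E.card : ℝ) * l ≤ 4 * ((x : ℝ) + y + z) + 8 * l := by exact_mod_cast c2
    have h12 : (E.card : ℝ) ≤ (4 * ((x : ℝ) + y + z) + 8 * l) / l := by
      rw [le_div_iff₀ hl0R]; exact hc2R
    have heq : (4 * ((x : ℝ) + y + z) + 8 * (l:ℝ)) / (l:ℝ) = 4 * ((x : ℝ) + y + z) / l + 8 := by
      field_simp
    rw [heq] at h12
    linarith
  have hkey : 4 * ((x : ℝ) + y + z) / l ≤ 2 * (s : ℝ) / (l : ℝ) ^ 2 := by
    rw [div_le_div_iff₀ hl0R (by positivity)]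
    have hsR : 2 * (l : ℝ) * ((x : ℝ) + y + z) ≤ (s : ℝ) := by exact_mod_cast hsurf
    nlinarith [hsR, hl0R]
  refine ⟨hFR, hER, ?_⟩
  have hAc : (A.card : ℝ) ≤ (F.card : ℝ) + (E.card : ℝ) := by exact_mod_cast c3n
  have : (s : ℝ) / (l:ℝ)^2 + 2 * (s:ℝ) / (l:ℝ)^2 = 3 * (s:ℝ) / (l:ℝ)^2 := by ring
  linarith
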